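/- A function f:B₈(0,r)→𝕆 on the open ball of radius r centered at 0 is slice monogenic if and only if it admits a power series expansion f(x) = Σ_{n=0}^{∞} xⁿ·(1/n!)·(∂ⁿf/∂xⁿ)(0), i.e. a series of the form Σ_{n≥0} xⁿaₙ with octonionic coefficients aₙ written on the right, converging on B₈(0,r). -/

import Mathlib

noncomputable section

open MeasureTheory

/-- The octonions `𝕆`, modelled as ℝ⁸ with the Euclidean norm. -/
abbrev Oct : Type := EuclideanSpace ℝ (Fin 8)

namespace Oct

/-- Index table of the octonionic multiplication: `e i * e j = ± e (idxT i j)`. -/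
def idxT : Fin 8 → Fin 8 → Fin 8 :=
  ![![0,1,2,3,4,5,6,7],
    ![1,0,4,5,2,3,7,6],
    ![2,4,0,6,1,7,3,5],
    ![3,5,6,0,7,1,2,4],
    ![4,2,1,7,0,6,5,3],
    ![5,3,7,1,6,0,4,2],
    ![6,7,3,2,5,4,0,1],
    ![7,6,5,4,3,2,1,0]]

/-- Sign table of the octonionic multiplication: `e i * e j = signT i j • e (idxT i j)`. -/
def signT : Fin 8 → Fin 8 → ℝ :=
  ![![1,1,1,1,1,1,1,1],
    ![1,-1,1,1,-1,-1,-1,1],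
    ![1,-1,-1,1,1,1,-1,-1],
    ![1,-1,-1,-1,-1,1,1,1],
    ![1,1,-1,1,-1,-1,1,-1],
    ![1,1,-1,-1,1,-1,-1,1],
    ![1,1,1,-1,-1,1,-1,-1],
    ![1,-1,1,-1,1,-1,1,-1]]

/-- Octonionic multiplication. -/
def omul (x y : Oct) : Oct :=
  (WithLp.equiv 2 (Fin 8 → ℝ)).symm fun k =>
    ∑ i : Fin 8, ∑ j : Fin 8,
      if idxT i j = k then signT i j * x i * y j else 0

/-- Octonionic conjugation `x̄`. -/
def oconj (x : Oct) : Oct :=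
  (WithLp.equiv 2 (Fin 8 → ℝ)).symm fun k => if k = 0 then x k else -x k

/-- Real part of an octonion. -/
def oRe (x : Oct) : ℝ := x 0

/-- The basis octonions `e i`. -/
def unit (i : Fin 8) : Oct := EuclideanSpace.single i 1

/-- The octonion `1`. -/
def oone : Oct := unit 0

/-- Powers of an octonion (powers are unambiguous by power-associativity). -/
def opow (x : Oct) : ℕ → Oct
  | 0 => oone
  | n + 1 => omul (opow x n) x

/-- Inverse of a nonzero octonion. -/
def oinv (x : Oct) : Oct := (‖x‖ ^ 2)⁻¹ • oconj x

/-- A function is left octonionic monogenic on `U` if `𝒟 f = 0` there, where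
`𝒟 = ∂/∂x₀ + Σᵢ eᵢ ∂/∂xᵢ` is the octonionic Cauchy–Riemann operator. -/
def LeftMonogenicOn (f : Oct → Oct) (U : Set Oct) : Prop :=
  ∀ x ∈ U, DifferentiableAt ℝ f x ∧
    ∑ i : Fin 8, omul (unit i) (fderiv ℝ f x (unit i)) = 0

/-- The sphere `𝕊` of imaginary units of `𝕆`. -/
def sphS : Set Oct := {x | oRe x = 0 ∧ ‖x‖ = 1}

/-- The complex slice `ℂ_I = ℝ + ℝ I`. -/
def sliceC (I : Oct) : Set Oct := {x | ∃ u v : ℝ, x = u • oone + v • I}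

/-- A function is (left) slice monogenic on `Ω` if its restriction to every slice `ℂ_I`
is holomorphic, i.e. `(∂/∂u + I ∂/∂v) f(u + Iv) = 0`. -/
def SliceMonogenicOn (f : Oct → Oct) (Ω : Set Oct) : Prop :=
  ∀ I ∈ sphS, ∀ u v : ℝ, u • oone + v • I ∈ Ω →
    DifferentiableAt ℝ (fun p : ℝ × ℝ => f (p.1 • oone + p.2 • I)) (u, v) ∧
    fderiv ℝ (fun p : ℝ × ℝ => f (p.1 • oone + p.2 • I)) (u, v) (1, 0)
      + omul I (fderiv ℝ (fun p : ℝ × ℝ => f (p.1 • oone + p.2 • I)) (u, v) (0, 1)) = 0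

end Oct


namespace Oct

lemma idxT_00 : idxT 0 0 = 0 := rfl
lemma signT_00 : signT 0 0 = 1 := rfl
lemma idxT_01 : idxT 0 1 = 1 := rfl
lemma signT_01 : signT 0 1 = 1 := rfl
lemma idxT_02 : idxT 0 2 = 2 := rfl
lemma signT_02 : signT 0 2 = 1 := rfl
lemma idxT_03 : idxT 0 3 = 3 := rfl
lemma signT_03 : signT 0 3 = 1 := rfl
lemma idxT_04 : idxT 0 4 = 4 := rfl
lemma signT_04 : signT 0 4 = 1 := rfl
lemma idxT_05 : idxT 0 5 = 5 := rfl
lemma signT_05 : signT 0 5 = 1 := rfl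
lemma idxT_06 : idxT 0 6 = 6 := rfl
lemma signT_06 : signT 0 6 = 1 := rfl
lemma idxT_07 : idxT 0 7 = 7 := rfl
lemma signT_07 : signT 0 7 = 1 := rfl
lemma idxT_10 : idxT 1 0 = 1 := rfl
lemma signT_10 : signT 1 0 = 1 := rfl
lemma idxT_11 : idxT 1 1 = 0 := rfl
lemma signT_11 : signT 1 1 = -1 := rfl
lemma idxT_12 : idxT 1 2 = 4 := rfl
lemma signT_12 : signT 1 2 = 1 := rfl
lemma idxT_13 : idxT 1 3 = 5 := rfl
lemma signT_13 : signT 1 3 = 1 := rfl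
lemma idxT_14 : idxT 1 4 = 2 := rfl
lemma signT_14 : signT 1 4 = -1 := rfl
lemma idxT_15 : idxT 1 5 = 3 := rfl
lemma signT_15 : signT 1 5 = -1 := rfl
lemma idxT_16 : idxT 1 6 = 7 := rfl
lemma signT_16 : signT 1 6 = -1 := rfl
lemma idxT_17 : idxT 1 7 = 6 := rfl
lemma signT_17 : signT 1 7 = 1 := rfl
lemma idxT_20 : idxT 2 0 = 2 := rfl
lemma signT_20 : signT 2 0 = 1 := rfl
lemma idxT_21 : idxT 2 1 = 4 := rfl
lemma signT_21 : signT 2 1 = -1 := rfl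
lemma idxT_22 : idxT 2 2 = 0 := rfl
lemma signT_22 : signT 2 2 = -1 := rfl
lemma idxT_23 : idxT 2 3 = 6 := rfl
lemma signT_23 : signT 2 3 = 1 := rfl
lemma idxT_24 : idxT 2 4 = 1 := rfl
lemma signT_24 : signT 2 4 = 1 := rfl
lemma idxT_25 : idxT 2 5 = 7 := rfl
lemma signT_25 : signT 2 5 = 1 := rfl
lemma idxT_26 : idxT 2 6 = 3 := rfl
lemma signT_26 : signT 2 6 = -1 := rfl
lemma idxT_27 : idxT 2 7 = 5 := rfl
lemma signT_27 : signT 2 7 = -1 := rfl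
lemma idxT_30 : idxT 3 0 = 3 := rfl
lemma signT_30 : signT 3 0 = 1 := rfl
lemma idxT_31 : idxT 3 1 = 5 := rfl
lemma signT_31 : signT 3 1 = -1 := rfl
lemma idxT_32 : idxT 3 2 = 6 := rfl
lemma signT_32 : signT 3 2 = -1 := rfl
lemma idxT_33 : idxT 3 3 = 0 := rfl
lemma signT_33 : signT 3 3 = -1 := rfl
lemma idxT_34 : idxT 3 4 = 7 := rfl
lemma signT_34 : signT 3 4 = -1 := rfl
lemma idxT_35 : idxT 3 5 = 1 := rfl
lemma signT_35 : signT 3 5 = 1 := rfl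
lemma idxT_36 : idxT 3 6 = 2 := rfl
lemma signT_36 : signT 3 6 = 1 := rfl
lemma idxT_37 : idxT 3 7 = 4 := rfl
lemma signT_37 : signT 3 7 = 1 := rfl
lemma idxT_40 : idxT 4 0 = 4 := rfl
lemma signT_40 : signT 4 0 = 1 := rfl
lemma idxT_41 : idxT 4 1 = 2 := rfl
lemma signT_41 : signT 4 1 = 1 := rfl
lemma idxT_42 : idxT 4 2 = 1 := rfl
lemma signT_42 : signT 4 2 = -1 := rfl
lemma idxT_43 : idxT 4 3 = 7 := rfl
lemma signT_43 : signT 4 3 = 1 := rfl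
lemma idxT_44 : idxT 4 4 = 0 := rfl
lemma signT_44 : signT 4 4 = -1 := rfl
lemma idxT_45 : idxT 4 5 = 6 := rfl
lemma signT_45 : signT 4 5 = -1 := rfl
lemma idxT_46 : idxT 4 6 = 5 := rfl
lemma signT_46 : signT 4 6 = 1 := rfl
lemma idxT_47 : idxT 4 7 = 3 := rfl
lemma signT_47 : signT 4 7 = -1 := rfl
lemma idxT_50 : idxT 5 0 = 5 := rfl
lemma signT_50 : signT 5 0 = 1 := rfl
lemma idxT_51 : idxT 5 1 = 3 := rfl
lemma signT_51 : signT 5 1 = 1 := rfl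
lemma idxT_52 : idxT 5 2 = 7 := rfl
lemma signT_52 : signT 5 2 = -1 := rfl
lemma idxT_53 : idxT 5 3 = 1 := rfl
lemma signT_53 : signT 5 3 = -1 := rfl
lemma idxT_54 : idxT 5 4 = 6 := rfl
lemma signT_54 : signT 5 4 = 1 := rfl
lemma idxT_55 : idxT 5 5 = 0 := rfl
lemma signT_55 : signT 5 5 = -1 := rfl
lemma idxT_56 : idxT 5 6 = 4 := rfl
lemma signT_56 : signT 5 6 = -1 := rfl
lemma idxT_57 : idxT 5 7 = 2 := rfl
lemma signT_57 : signT 5 7 = 1 := rfl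
lemma idxT_60 : idxT 6 0 = 6 := rfl
lemma signT_60 : signT 6 0 = 1 := rfl
lemma idxT_61 : idxT 6 1 = 7 := rfl
lemma signT_61 : signT 6 1 = 1 := rfl
lemma idxT_62 : idxT 6 2 = 3 := rfl
lemma signT_62 : signT 6 2 = 1 := rfl
lemma idxT_63 : idxT 6 3 = 2 := rfl
lemma signT_63 : signT 6 3 = -1 := rfl
lemma idxT_64 : idxT 6 4 = 5 := rfl
lemma signT_64 : signT 6 4 = -1 := rfl
lemma idxT_65 : idxT 6 5 = 4 := rfl
lemma signT_65 : signT 6 5 = 1 := rfl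
lemma idxT_66 : idxT 6 6 = 0 := rfl
lemma signT_66 : signT 6 6 = -1 := rfl
lemma idxT_67 : idxT 6 7 = 1 := rfl
lemma signT_67 : signT 6 7 = -1 := rfl
lemma idxT_70 : idxT 7 0 = 7 := rfl
lemma signT_70 : signT 7 0 = 1 := rfl
lemma idxT_71 : idxT 7 1 = 6 := rfl
lemma signT_71 : signT 7 1 = -1 := rfl
lemma idxT_72 : idxT 7 2 = 5 := rfl
lemma signT_72 : signT 7 2 = 1 := rfl
lemma idxT_73 : idxT 7 3 = 4 := rfl
lemma signT_73 : signT 7 3 = -1 := rfl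
lemma idxT_74 : idxT 7 4 = 3 := rfl
lemma signT_74 : signT 7 4 = 1 := rfl
lemma idxT_75 : idxT 7 5 = 2 := rfl
lemma signT_75 : signT 7 5 = -1 := rfl
lemma idxT_76 : idxT 7 6 = 1 := rfl
lemma signT_76 : signT 7 6 = 1 := rfl
lemma idxT_77 : idxT 7 7 = 0 := rfl
lemma signT_77 : signT 7 7 = -1 := rfl

lemma omul_component (x y : Oct) (k : Fin 8) :
    omul x y k = ∑ i : Fin 8, ∑ j : Fin 8,
      (if idxT i j = k then signT i j * x i * y j else 0) := rfl

lemma omul_c0 (x y : Oct) : omul x y 0 = x 0 * y 0 -  x 1 * y 1 -  x 2 * y 2 -  x 3 * y 3 -  x 4 * y 4 -  x 5 * y 5 -  x 6 * y 6 -  x 7 * y 7 := by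
  simp only [omul_component, Fin.sum_univ_eight, idxT_00, idxT_01, idxT_02, idxT_03, idxT_04, idxT_05, idxT_06, idxT_07, idxT_10, idxT_11, idxT_12, idxT_13, idxT_14, idxT_15, idxT_16, idxT_17, idxT_20, idxT_21, idxT_22, idxT_23, idxT_24, idxT_25, idxT_26, idxT_27, idxT_30, idxT_31, idxT_32, idxT_33, idxT_34, idxT_35, idxT_36, idxT_37, idxT_40, idxT_41, idxT_42, idxT_43, idxT_44, idxT_45, idxT_46, idxT_47, idxT_50, idxT_51, idxT_52, idxT_53, idxT_54, idxT_55, idxT_56, idxT_57, idxT_60, idxT_61, idxT_62, idxT_63, idxT_64, idxT_65, idxT_66, idxT_67, idxT_70, idxT_71, idxT_72, idxT_73, idxT_74, idxT_75, idxT_76, idxT_77, signT_00, signT_01, signT_02, signT_03, signT_04, signT_05, signT_06, signT_07, signT_10, signT_11, signT_12, signT_13, signT_14, signT_15, signT_16, signT_17, signT_20, signT_21, signT_22, signT_23, signT_24, signT_25, signT_26, signT_27, signT_30, signT_31, signT_32, signT_33, signT_34, signT_35, signT_36, signT_37, signT_40, signT_41, signT_42, signT_43, signT_44, signT_45, signT_46,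 signT_47, signT_50, signT_51, signT_52, signT_53, signT_54, signT_55, signT_56, signT_57, signT_60, signT_61, signT_62, signT_63, signT_64, signT_65, signT_66, signT_67, signT_70, signT_71, signT_72, signT_73, signT_74, signT_75, signT_76, signT_77]
  simp
  try ring
lemma omul_c1 (x y : Oct) : omul x y 1 = x 0 * y 1 + x 1 * y 0 + x 2 * y 4 + x 3 * y 5 -  x 4 * y 2 -  x 5 * y 3 -  x 6 * y 7 + x 7 * y 6 := by
  simp only [omul_component, Fin.sum_univ_eight, idxT_00, idxT_01, idxT_02, idxT_03, idxT_04, idxT_05, idxT_06, idxT_07, idxT_10, idxT_11, idxT_12, idxT_13, idxT_14, idxT_15, idxT_16, idxT_17, idxT_20, idxT_21, idxT_22, idxT_23, idxT_24, idxT_25, idxT_26, idxT_27, idxT_30, idxT_31, idxT_32, idxT_33, idxT_34, idxT_35, idxT_36, idxT_37, idxT_40, idxT_41, idxT_42, idxT_43, idxT_44, idxT_45, idxT_46, idxT_47, idxT_50, idxT_51, idxT_52, idxT_53, idxT_54, idxT_55, idxT_56, idxT_57, idxT_60, idxT_61, idxT_62, idxT_63, idxT_64, idxT_65, idxT_66,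 idxT_67, idxT_70, idxT_71, idxT_72, idxT_73, idxT_74, idxT_75, idxT_76, idxT_77, signT_00, signT_01, signT_02, signT_03, signT_04, signT_05, signT_06, signT_07, signT_10, signT_11, signT_12, signT_13, signT_14, signT_15, signT_16, signT_17, signT_20, signT_21, signT_22, signT_23, signT_24, signT_25, signT_26, signT_27, signT_30, signT_31, signT_32, signT_33, signT_34, signT_35, signT_36, signT_37, signT_40, signT_41, signT_42, signT_43, signT_44, signT_45, signT_46, signT_47, signT_50, signT_51, signT_52, signT_53, signT_54, signT_55, signT_56, signT_57, signT_60, signT_61, signT_62, signT_63, signT_64, signT_65, signT_66, signT_67, signT_70, signT_71, signT_72, signT_73, signT_74, signT_75, signT_76, signT_77]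
  simp
  try ring
lemma omul_c2 (x y : Oct) : omul x y 2 = x 0 * y 2 -  x 1 * y 4 + x 2 * y 0 + x 3 * y 6 + x 4 * y 1 + x 5 * y 7 -  x 6 * y 3 -  x 7 * y 5 := by
  simp only [omul_component, Fin.sum_univ_eight, idxT_00, idxT_01, idxT_02, idxT_03, idxT_04, idxT_05, idxT_06, idxT_07, idxT_10, idxT_11, idxT_12, idxT_13, idxT_14, idxT_15, idxT_16, idxT_17, idxT_20, idxT_21, idxT_22, idxT_23, idxT_24, idxT_25, idxT_26, idxT_27, idxT_30, idxT_31, idxT_32, idxT_33, idxT_34, idxT_35, idxT_36, idxT_37, idxT_40, idxT_41, idxT_42, idxT_43, idxT_44, idxT_45, idxT_46, idxT_47, idxT_50, idxT_51, idxT_52, idxT_53, idxT_54, idxT_55, idxT_56, idxT_57, idxT_60, idxT_61, idxT_62, idxT_63, idxT_64, idxT_65, idxT_66, idxT_67, idxT_70, idxT_71, idxT_72, idxT_73, idxT_74, idxT_75, idxT_76, idxT_77, signT_00, signT_01, signT_02, signT_03, signT_04, signT_05, signT_06, signT_07, signT_10, signT_11, signT_12, signT_13, signT_14, signT_15, signT_16,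 signT_17, signT_20, signT_21, signT_22, signT_23, signT_24, signT_25, signT_26, signT_27, signT_30, signT_31, signT_32, signT_33, signT_34, signT_35, signT_36, signT_37, signT_40, signT_41, signT_42, signT_43, signT_44, signT_45, signT_46, signT_47, signT_50, signT_51, signT_52, signT_53, signT_54, signT_55, signT_56, signT_57, signT_60, signT_61, signT_62, signT_63, signT_64, signT_65, signT_66, signT_67, signT_70, signT_71, signT_72, signT_73, signT_74, signT_75, signT_76, signT_77]
  simp
  try ring
lemma omul_c3 (x y : Oct) : omul x y 3 = x 0 * y 3 -  x 1 * y 5 -  x 2 * y 6 + x 3 * y 0 -  x 4 * y 7 + x 5 * y 1 + x 6 * y 2 + x 7 * y 4 := by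
  simp only [omul_component, Fin.sum_univ_eight, idxT_00, idxT_01, idxT_02, idxT_03, idxT_04, idxT_05, idxT_06, idxT_07, idxT_10, idxT_11, idxT_12, idxT_13, idxT_14, idxT_15, idxT_16, idxT_17, idxT_20, idxT_21, idxT_22, idxT_23, idxT_24, idxT_25, idxT_26, idxT_27, idxT_30, idxT_31, idxT_32, idxT_33, idxT_34, idxT_35, idxT_36, idxT_37, idxT_40, idxT_41, idxT_42, idxT_43, idxT_44, idxT_45, idxT_46, idxT_47, idxT_50, idxT_51, idxT_52, idxT_53, idxT_54, idxT_55, idxT_56, idxT_57, idxT_60, idxT_61, idxT_62, idxT_63, idxT_64, idxT_65, idxT_66, idxT_67, idxT_70, idxT_71, idxT_72, idxT_73, idxT_74, idxT_75, idxT_76, idxT_77, signT_00, signT_01, signT_02, signT_03, signT_04, signT_05, signT_06, signT_07, signT_10, signT_11, signT_12, signT_13, signT_14, signT_15, signT_16, signT_17, signT_20, signT_21, signT_22, signT_23, signT_24, signT_25, signT_26, signT_27, signT_30, signT_31, signT_32, signT_33, signT_34, signT_35, signT_36, signT_37, signT_40, signT_41, signT_42, signT_43, signT_44, signT_45, signT_46,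 signT_47, signT_50, signT_51, signT_52, signT_53, signT_54, signT_55, signT_56, signT_57, signT_60, signT_61, signT_62, signT_63, signT_64, signT_65, signT_66, signT_67, signT_70, signT_71, signT_72, signT_73, signT_74, signT_75, signT_76, signT_77]
  simp
  try ring
lemma omul_c4 (x y : Oct) : omul x y 4 = x 0 * y 4 + x 1 * y 2 -  x 2 * y 1 + x 3 * y 7 + x 4 * y 0 -  x 5 * y 6 + x 6 * y 5 -  x 7 * y 3 := by
  simp only [omul_component, Fin.sum_univ_eight, idxT_00, idxT_01, idxT_02, idxT_03, idxT_04, idxT_05, idxT_06, idxT_07, idxT_10, idxT_11, idxT_12, idxT_13, idxT_14, idxT_15, idxT_16, idxT_17, idxT_20, idxT_21, idxT_22, idxT_23, idxT_24, idxT_25, idxT_26, idxT_27, idxT_30, idxT_31, idxT_32, idxT_33, idxT_34, idxT_35, idxT_36, idxT_37, idxT_40, idxT_41, idxT_42, idxT_43, idxT_44, idxT_45, idxT_46, idxT_47, idxT_50, idxT_51, idxT_52, idxT_53, idxT_54, idxT_55, idxT_56, idxT_57, idxT_60, idxT_61, idxT_62, idxT_63, idxT_64, idxT_65, idxT_66,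 idxT_67, idxT_70, idxT_71, idxT_72, idxT_73, idxT_74, idxT_75, idxT_76, idxT_77, signT_00, signT_01, signT_02, signT_03, signT_04, signT_05, signT_06, signT_07, signT_10, signT_11, signT_12, signT_13, signT_14, signT_15, signT_16, signT_17, signT_20, signT_21, signT_22, signT_23, signT_24, signT_25, signT_26, signT_27, signT_30, signT_31, signT_32, signT_33, signT_34, signT_35, signT_36, signT_37, signT_40, signT_41, signT_42, signT_43, signT_44, signT_45, signT_46, signT_47, signT_50, signT_51, signT_52, signT_53, signT_54, signT_55, signT_56, signT_57, signT_60, signT_61, signT_62, signT_63, signT_64, signT_65, signT_66, signT_67, signT_70, signT_71, signT_72, signT_73, signT_74, signT_75, signT_76, signT_77]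
  simp
  try ring
lemma omul_c5 (x y : Oct) : omul x y 5 = x 0 * y 5 + x 1 * y 3 -  x 2 * y 7 -  x 3 * y 1 + x 4 * y 6 + x 5 * y 0 -  x 6 * y 4 + x 7 * y 2 := by
  simp only [omul_component, Fin.sum_univ_eight, idxT_00, idxT_01, idxT_02, idxT_03, idxT_04, idxT_05, idxT_06, idxT_07, idxT_10, idxT_11, idxT_12, idxT_13, idxT_14, idxT_15, idxT_16, idxT_17, idxT_20, idxT_21, idxT_22, idxT_23, idxT_24, idxT_25, idxT_26, idxT_27, idxT_30, idxT_31, idxT_32, idxT_33, idxT_34, idxT_35, idxT_36, idxT_37, idxT_40, idxT_41, idxT_42, idxT_43, idxT_44, idxT_45, idxT_46, idxT_47, idxT_50, idxT_51, idxT_52, idxT_53, idxT_54, idxT_55, idxT_56, idxT_57, idxT_60, idxT_61, idxT_62, idxT_63, idxT_64, idxT_65, idxT_66, idxT_67, idxT_70, idxT_71, idxT_72, idxT_73, idxT_74, idxT_75, idxT_76, idxT_77, signT_00, signT_01, signT_02, signT_03, signT_04, signT_05, signT_06, signT_07, signT_10, signT_11, signT_12, signT_13, signT_14, signT_15, signT_16,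 signT_17, signT_20, signT_21, signT_22, signT_23, signT_24, signT_25, signT_26, signT_27, signT_30, signT_31, signT_32, signT_33, signT_34, signT_35, signT_36, signT_37, signT_40, signT_41, signT_42, signT_43, signT_44, signT_45, signT_46, signT_47, signT_50, signT_51, signT_52, signT_53, signT_54, signT_55, signT_56, signT_57, signT_60, signT_61, signT_62, signT_63, signT_64, signT_65, signT_66, signT_67, signT_70, signT_71, signT_72, signT_73, signT_74, signT_75, signT_76, signT_77]
  simp
  try ring
lemma omul_c6 (x y : Oct) : omul x y 6 = x 0 * y 6 + x 1 * y 7 + x 2 * y 3 -  x 3 * y 2 -  x 4 * y 5 + x 5 * y 4 + x 6 * y 0 -  x 7 * y 1 := by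
  simp only [omul_component, Fin.sum_univ_eight, idxT_00, idxT_01, idxT_02, idxT_03, idxT_04, idxT_05, idxT_06, idxT_07, idxT_10, idxT_11, idxT_12, idxT_13, idxT_14, idxT_15, idxT_16, idxT_17, idxT_20, idxT_21, idxT_22, idxT_23, idxT_24, idxT_25, idxT_26, idxT_27, idxT_30, idxT_31, idxT_32, idxT_33, idxT_34, idxT_35, idxT_36, idxT_37, idxT_40, idxT_41, idxT_42, idxT_43, idxT_44, idxT_45, idxT_46, idxT_47, idxT_50, idxT_51, idxT_52, idxT_53, idxT_54, idxT_55, idxT_56, idxT_57, idxT_60, idxT_61, idxT_62, idxT_63, idxT_64, idxT_65, idxT_66, idxT_67, idxT_70, idxT_71, idxT_72, idxT_73, idxT_74, idxT_75, idxT_76, idxT_77, signT_00, signT_01, signT_02, signT_03, signT_04, signT_05, signT_06, signT_07, signT_10, signT_11, signT_12, signT_13, signT_14, signT_15, signT_16, signT_17, signT_20, signT_21, signT_22, signT_23, signT_24, signT_25, signT_26, signT_27, signT_30, signT_31, signT_32, signT_33, signT_34, signT_35, signT_36, signT_37, signT_40, signT_41, signT_42, signT_43, signT_44, signT_45, signT_46,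 signT_47, signT_50, signT_51, signT_52, signT_53, signT_54, signT_55, signT_56, signT_57, signT_60, signT_61, signT_62, signT_63, signT_64, signT_65, signT_66, signT_67, signT_70, signT_71, signT_72, signT_73, signT_74, signT_75, signT_76, signT_77]
  simp
  try ring
lemma omul_c7 (x y : Oct) : omul x y 7 = x 0 * y 7 -  x 1 * y 6 + x 2 * y 5 -  x 3 * y 4 + x 4 * y 3 -  x 5 * y 2 + x 6 * y 1 + x 7 * y 0 := by
  simp only [omul_component, Fin.sum_univ_eight, idxT_00, idxT_01, idxT_02, idxT_03, idxT_04, idxT_05, idxT_06, idxT_07, idxT_10, idxT_11, idxT_12, idxT_13, idxT_14, idxT_15, idxT_16, idxT_17, idxT_20, idxT_21, idxT_22, idxT_23, idxT_24, idxT_25, idxT_26, idxT_27, idxT_30, idxT_31, idxT_32, idxT_33, idxT_34, idxT_35, idxT_36, idxT_37, idxT_40, idxT_41, idxT_42, idxT_43, idxT_44, idxT_45, idxT_46, idxT_47, idxT_50, idxT_51, idxT_52, idxT_53, idxT_54, idxT_55, idxT_56, idxT_57, idxT_60, idxT_61, idxT_62, idxT_63, idxT_64, idxT_65, idxT_66,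 idxT_67, idxT_70, idxT_71, idxT_72, idxT_73, idxT_74, idxT_75, idxT_76, idxT_77, signT_00, signT_01, signT_02, signT_03, signT_04, signT_05, signT_06, signT_07, signT_10, signT_11, signT_12, signT_13, signT_14, signT_15, signT_16, signT_17, signT_20, signT_21, signT_22, signT_23, signT_24, signT_25, signT_26, signT_27, signT_30, signT_31, signT_32, signT_33, signT_34, signT_35, signT_36, signT_37, signT_40, signT_41, signT_42, signT_43, signT_44, signT_45, signT_46, signT_47, signT_50, signT_51, signT_52, signT_53, signT_54, signT_55, signT_56, signT_57, signT_60, signT_61, signT_62, signT_63, signT_64, signT_65, signT_66, signT_67, signT_70, signT_71, signT_72, signT_73, signT_74, signT_75, signT_76, signT_77]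
  simp
  try ring

lemma oct_ext {x y : Oct} (h : ∀ k, x k = y k) : x = y := PiLp.ext h


lemma oct_ext8 {x y : Oct} (h0 : x 0 = y 0) (h1 : x 1 = y 1) (h2 : x 2 = y 2)
    (h3 : x 3 = y 3) (h4 : x 4 = y 4) (h5 : x 5 = y 5) (h6 : x 6 = y 6)
    (h7 : x 7 = y 7) : x = y := by
  apply oct_ext; intro k; fin_cases k <;> assumption
lemma add_apply' (x y : Oct) (k : Fin 8) : (x + y) k = x k + y k := rfl
lemma smul_apply' (r : ℝ) (x : Oct) (k : Fin 8) : (r • x) k = r * x k := rfl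
lemma neg_apply' (x : Oct) (k : Fin 8) : (-x) k = -(x k) := rfl
lemma zero_apply' (k : Fin 8) : (0 : Oct) k = 0 := rfl

lemma omul_add_left (x x' y : Oct) : omul (x + x') y = omul x y + omul x' y := by
  apply oct_ext8 <;> simp only [omul_c0, omul_c1, omul_c2, omul_c3, omul_c4, omul_c5, omul_c6, omul_c7, add_apply', smul_apply'] <;> ring

lemma omul_add_right (x y y' : Oct) : omul x (y + y') = omul x y + omul x y' := by
  apply oct_ext8 <;> simp only [omul_c0, omul_c1, omul_c2, omul_c3, omul_c4, omul_c5, omul_c6, omul_c7, add_apply', smul_apply'] <;> ring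

lemma omul_smul_left (r : ℝ) (x y : Oct) : omul (r • x) y = r • omul x y := by
  apply oct_ext8 <;> simp only [omul_c0, omul_c1, omul_c2, omul_c3, omul_c4, omul_c5, omul_c6, omul_c7, add_apply', smul_apply'] <;> ring

lemma omul_smul_right (r : ℝ) (x y : Oct) : omul x (r • y) = r • omul x y := by
  apply oct_ext8 <;> simp only [omul_c0, omul_c1, omul_c2, omul_c3, omul_c4, omul_c5, omul_c6, omul_c7, add_apply', smul_apply'] <;> ring

lemma oone_c0' : oone 0 = 1 := rfl
lemma oone_ck (k : Fin 8) (hk : k ≠ 0) : oone k = 0 := by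
  simp only [oone, unit, EuclideanSpace.single_apply]
  rw [if_neg]; intro h; exact hk h

lemma omul_oone (x : Oct) : omul x oone = x := by
  have h1 : oone 1 = 0 := oone_ck 1 (by decide)
  have h2 : oone 2 = 0 := oone_ck 2 (by decide)
  have h3 : oone 3 = 0 := oone_ck 3 (by decide)
  have h4 : oone 4 = 0 := oone_ck 4 (by decide)
  have h5 : oone 5 = 0 := oone_ck 5 (by decide)
  have h6 : oone 6 = 0 := oone_ck 6 (by decide)
  have h7 : oone 7 = 0 := oone_ck 7 (by decide)
  apply oct_ext8 <;> simp only [omul_c0, omul_c1, omul_c2, omul_c3, omul_c4, omul_c5, omul_c6, omul_c7, oone_c0', h1, h2, h3, h4, h5, h6, h7] <;> ring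

lemma oone_omul (x : Oct) : omul oone x = x := by
  have h1 : oone 1 = 0 := oone_ck 1 (by decide)
  have h2 : oone 2 = 0 := oone_ck 2 (by decide)
  have h3 : oone 3 = 0 := oone_ck 3 (by decide)
  have h4 : oone 4 = 0 := oone_ck 4 (by decide)
  have h5 : oone 5 = 0 := oone_ck 5 (by decide)
  have h6 : oone 6 = 0 := oone_ck 6 (by decide)
  have h7 : oone 7 = 0 := oone_ck 7 (by decide)
  apply oct_ext8 <;> simp only [omul_c0, omul_c1, omul_c2, omul_c3, omul_c4, omul_c5, omul_c6, omul_c7, oone_c0', h1, h2, h3, h4, h5, h6, h7] <;> ring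

/-- key: for unit imaginary I, left multiplication squares to -1 -/
lemma omul_I_I (I : Oct) (h0 : I 0 = 0)
    (hn : I 1 ^ 2 + I 2 ^ 2 + I 3 ^ 2 + I 4 ^ 2 + I 5 ^ 2 + I 6 ^ 2 + I 7 ^ 2 = 1)
    (w : Oct) : omul I (omul I w) = -w := by
  apply oct_ext8 <;>
    simp only [omul_c0, omul_c1, omul_c2, omul_c3, omul_c4, omul_c5, omul_c6, omul_c7, neg_apply', h0] <;>
    [(linear_combination (-(w 0)) * hn); (linear_combination (-(w 1)) * hn);
     (linear_combination (-(w 2)) * hn); (linear_combination (-(w 3)) * hn);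
     (linear_combination (-(w 4)) * hn); (linear_combination (-(w 5)) * hn);
     (linear_combination (-(w 6)) * hn); (linear_combination (-(w 7)) * hn)]

/-- orthogonality of w and I*w for imaginary I -/
lemma inner_omul_orth (I : Oct) (h0 : I 0 = 0) (w : Oct) :
    ∑ k : Fin 8, w k * omul I w k = 0 := by
  simp only [Fin.sum_univ_eight, omul_c0, omul_c1, omul_c2, omul_c3, omul_c4, omul_c5, omul_c6, omul_c7, h0]; ring

/-- Degen-type identity: the norm is multiplicative. -/
lemma omul_sumsq (x y : Oct) :
    ∑ k : Fin 8, (omul x y k)^2 = (∑ i : Fin 8, (x i)^2) * (∑ j : Fin 8, (y j)^2) := by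
  simp only [Fin.sum_univ_eight, omul_c0, omul_c1, omul_c2, omul_c3, omul_c4, omul_c5, omul_c6, omul_c7]; ring

lemma oone_c1 : oone 1 = 0 := oone_ck 1 (by decide)
lemma oone_c2 : oone 2 = 0 := oone_ck 2 (by decide)
lemma oone_c3 : oone 3 = 0 := oone_ck 3 (by decide)
lemma oone_c4 : oone 4 = 0 := oone_ck 4 (by decide)
lemma oone_c5 : oone 5 = 0 := oone_ck 5 (by decide)
lemma oone_c6 : oone 6 = 0 := oone_ck 6 (by decide)
lemma oone_c7 : oone 7 = 0 := oone_ck 7 (by decide)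

lemma omul_zero_right (x : Oct) : omul x 0 = 0 := by
  have h := omul_smul_right 0 x 0; rwa [zero_smul, zero_smul] at h
lemma omul_zero_left (y : Oct) : omul 0 y = 0 := by
  have h := omul_smul_left 0 0 y; rwa [zero_smul, zero_smul] at h

lemma norm_sq_eq (x : Oct) : ‖x‖ ^ 2 = ∑ k : Fin 8, (x k) ^ 2 := by
  rw [EuclideanSpace.norm_eq, Real.sq_sqrt (by positivity)]
  simp [Real.norm_eq_abs, sq_abs]

def sphS' : Set Oct := {x | x 0 = 0 ∧ ‖x‖ = 1}

variable {I : Oct}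

lemma sph_h0 (hI : I ∈ sphS') : I 0 = 0 := hI.1

lemma sph_hn (hI : I ∈ sphS') :
    I 1 ^ 2 + I 2 ^ 2 + I 3 ^ 2 + I 4 ^ 2 + I 5 ^ 2 + I 6 ^ 2 + I 7 ^ 2 = 1 := by
  have h := hI.2
  have h2 : ‖I‖ ^ 2 = 1 := by rw [h]; norm_num
  rw [norm_sq_eq, Fin.sum_univ_eight, hI.1] at h2
  linarith

lemma omul_I_sq (hI : I ∈ sphS') (w : Oct) : omul I (omul I w) = -w :=
  omul_I_I I (sph_h0 hI) (sph_hn hI) w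

lemma omul_II (hI : I ∈ sphS') : omul I I = -oone := by
  have h := omul_I_sq hI oone; rwa [omul_oone] at h

/-- embedding of `ℂ` onto the slice `ℂ_I`. -/
def iotaC (I : Oct) (z : ℂ) : Oct := z.re • oone + z.im • I

lemma iota_ofReal (I : Oct) (t : ℝ) : iotaC I (t : ℂ) = t • oone := by
  simp [iotaC]

lemma omul_iota (z : ℂ) (w : Oct) :
    omul (iotaC I z) w = z.re • w + z.im • omul I w := by
  rw [iotaC, omul_add_left, omul_smul_left, omul_smul_left, oone_omul]

lemma omul_iota_iota (hI : I ∈ sphS') (z₁ z₂ : ℂ) :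
    omul (iotaC I z₁) (iotaC I z₂) = iotaC I (z₁ * z₂) := by
  rw [omul_iota, iotaC, iotaC, omul_add_right, omul_smul_right, omul_smul_right,
    omul_oone, omul_II hI, Complex.mul_re, Complex.mul_im]
  module

lemma opow_iota (hI : I ∈ sphS') (z : ℂ) (n : ℕ) :
    opow (iotaC I z) n = iotaC I (z ^ n) := by
  induction n with
  | zero =>
    show oone = iotaC I (z ^ 0)
    rw [pow_zero]
    simp [iotaC]
  | succ n ih =>
    show omul (opow (iotaC I z) n) (iotaC I z) = _
    rw [ih, omul_iota_iota hI, ← pow_succ]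

lemma sq_eq_of_nonneg {a b : ℝ} (ha : 0 ≤ a) (hb : 0 ≤ b) (h : a ^ 2 = b ^ 2) : a = b := by
  nlinarith

lemma norm_iota (hI : I ∈ sphS') (z : ℂ) : ‖iotaC I z‖ = ‖z‖ := by
  have h0 := sph_h0 hI; have hn := sph_hn hI
  refine sq_eq_of_nonneg (norm_nonneg _) (norm_nonneg _) ?_
  rw [norm_sq_eq, Complex.sq_norm, Complex.normSq_apply]
  simp only [iotaC, Fin.sum_univ_eight, add_apply', smul_apply', oone_c0', oone_c1, oone_c2,
    oone_c3, oone_c4, oone_c5, oone_c6, oone_c7, h0]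
  linear_combination (z.im ^ 2) * hn

lemma norm_slice_smul (hI : I ∈ sphS') (z : ℂ) (w : Oct) :
    ‖z.re • w + z.im • omul I w‖ = ‖z‖ * ‖w‖ := by
  have h0 := sph_h0 hI; have hn := sph_hn hI
  refine sq_eq_of_nonneg (norm_nonneg _) (by positivity) ?_
  have ht := inner_omul_orth I h0 w
  have hu := omul_sumsq I w
  rw [Fin.sum_univ_eight] at ht
  rw [Fin.sum_univ_eight, Fin.sum_univ_eight, Fin.sum_univ_eight, h0] at hu
  rw [mul_pow, norm_sq_eq, norm_sq_eq, Complex.sq_norm, Complex.normSq_apply,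
    Fin.sum_univ_eight, Fin.sum_univ_eight]
  simp only [add_apply', smul_apply']
  linear_combination (2 * z.re * z.im) * ht + z.im ^ 2 * hu
    + (z.im ^ 2 * (w 0 ^ 2 + w 1 ^ 2 + w 2 ^ 2 + w 3 ^ 2 + w 4 ^ 2 + w 5 ^ 2 + w 6 ^ 2 + w 7 ^ 2)) * hn

/-- The complex module structure on `Oct` induced by a slice `ℂ_I`. -/
def sliceNS (I : Oct) (hI : I ∈ sphS') : NormedSpace ℂ Oct :=
  { smul := fun z w => z.re • w + z.im • omul I w
    one_smul := fun w => by
      show (1:ℂ).re • w + (1:ℂ).im • omul I w = w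
      simp
    mul_smul := fun z₁ z₂ w => by
      show (z₁*z₂).re • w + (z₁*z₂).im • omul I w
        = z₁.re • (z₂.re • w + z₂.im • omul I w) + z₁.im • omul I (z₂.re • w + z₂.im • omul I w)
      rw [omul_add_right, omul_smul_right, omul_smul_right, omul_I_sq hI,
        Complex.mul_re, Complex.mul_im]
      module
    smul_zero := fun z => by
      show z.re • (0:Oct) + z.im • omul I 0 = 0
      rw [omul_zero_right]; simp
    smul_add := fun z w w' => by
      show z.re • (w + w') + z.im • omul I (w + w') = _
      rw [omul_add_right]
      show _ = (z.re • w + z.im • omul I w) + (z.re • w' + z.im • omul I w')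
      module
    add_smul := fun z₁ z₂ w => by
      show (z₁+z₂).re • w + (z₁+z₂).im • omul I w
        = (z₁.re • w + z₁.im • omul I w) + (z₂.re • w + z₂.im • omul I w)
      rw [Complex.add_re, Complex.add_im]
      module
    zero_smul := fun w => by
      show (0:ℂ).re • w + (0:ℂ).im • omul I w = 0
      simp
    norm_smul_le := fun z w => le_of_eq (norm_slice_smul hI z w) }

open Metric in
/-- tower compatibility of the slice scalar structure -/
lemma slice_tower (I : Oct) (hI : I ∈ sphS') :
    letI := sliceNS I hI
    IsScalarTower ℝ ℂ Oct := by
  letI := sliceNS I hI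
  refine ⟨fun r z w => ?_⟩
  show ((r • z).re) • w + ((r • z).im) • omul I w = r • (z.re • w + z.im • omul I w)
  rw [Complex.smul_re, Complex.smul_im]
  rw [smul_eq_mul, smul_eq_mul, mul_smul, mul_smul, smul_add]

open Metric in
lemma forward_key (r : ℝ) (hr : 0 < r) (f : Oct → Oct)
    (hsm : SliceMonogenicOn f (ball (0 : Oct) r)) (I : Oct) (hI : I ∈ sphS')
    (z : ℂ) (hz : ‖z‖ < r) :
    HasSum (fun n : ℕ => omul (opow (iotaC I z) n)
      (((Nat.factorial n : ℝ))⁻¹ • iteratedDeriv n (fun t : ℝ => f (t • oone)) 0))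
      (f (iotaC I z)) := by
  letI := sliceNS I hI
  haveI := slice_tower I hI
  set g : ℂ → Oct := fun w => f (iotaC I w) with hg
  -- complex differentiability on the disc
  have hdiff : ∀ w : ℂ, ‖w‖ < r → DifferentiableAt ℂ g w := by
    intro w hw
    have hmem : w.re • oone + w.im • I ∈ ball (0 : Oct) r := by
      rw [mem_ball_zero_iff]
      show ‖iotaC I w‖ < r
      rw [norm_iota hI]; exact hw
    obtain ⟨hd, hcr⟩ := hsm I hI w.re w.im hmem
    set h : ℝ × ℝ → Oct := fun p => f (p.1 • oone + p.2 • I) with hh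
    set D := fderiv ℝ h (w.re, w.im) with hD
    have hDd : HasFDerivAt h D (w.re, w.im) := hd.hasFDerivAt
    have hDv : D (0, 1) = omul I (D (1, 0)) := by
      have h1 := congrArg (omul I) hcr
      rw [omul_add_right, omul_I_sq hI, omul_zero_right] at h1
      have h2 : omul I (D (1, 0)) - D (0, 1) = 0 := by
        rw [sub_eq_add_neg]; exact h1
      exact (sub_eq_zero.mp h2).symm
    set v := D (1, 0) with hv
    set L : ℂ →L[ℂ] Oct := ContinuousLinearMap.smulRight (1 : ℂ →L[ℂ] ℂ) v with hL
    have hgcomp : HasFDerivAt g (D.comp (Complex.equivRealProdCLM : ℂ →L[ℝ] ℝ × ℝ)) w := by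
      have := hDd.comp w (Complex.equivRealProdCLM.hasFDerivAt (x := w))
      exact this
    have hLD : L.restrictScalars ℝ = D.comp (Complex.equivRealProdCLM : ℂ →L[ℝ] ℝ × ℝ) := by
      apply ContinuousLinearMap.ext
      intro ζ
      have hζ : (Complex.equivRealProdCLM ζ : ℝ × ℝ)
          = ζ.re • ((1 : ℝ), (0 : ℝ)) + ζ.im • ((0 : ℝ), (1 : ℝ)) := by
        simp [Prod.ext_iff, Complex.equivRealProdCLM_apply]
      show ζ • v = D (Complex.equivRealProdCLM ζ)
      rw [hζ, map_add, D.map_smul, D.map_smul, ← hv, hDv]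
      show ζ.re • v + ζ.im • omul I v = _
      rfl
    have : HasFDerivAt g L w := hasFDerivAt_of_restrictScalars ℝ hgcomp hLD
    exact this.differentiableAt
  -- power series structure
  have habs : 0 ≤ ‖z‖ := norm_nonneg z
  set R : NNReal := ⟨(‖z‖ + r)/2, by positivity⟩ with hR
  have hRr : (R : ℝ) = (‖z‖ + r)/2 := rfl
  have hzR : ‖z‖ < (R : ℝ) := by rw [hRr]; linarith
  have hRltr : (R : ℝ) < r := by rw [hRr]; linarith
  have hdOn : DifferentiableOn ℂ g (ball (0:ℂ) r) := by
    intro w hw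
    refine (hdiff w ?_).differentiableWithinAt
    rwa [mem_ball_zero_iff] at hw
  have hRpos : 0 < R := by
    rw [← NNReal.coe_pos, hRr]; linarith
  have hps : HasFPowerSeriesOnBall g (cauchyPowerSeries g 0 R) 0 R :=
    (hdOn.mono (closedBall_subset_ball hRltr)).hasFPowerSeriesOnBall hRpos
  set p := cauchyPowerSeries g 0 R with hp
  -- restriction of a complex-differentiable function to the real axis
  have hcor : ∀ (G : ℂ → Oct) (s : ℝ) (vv : Oct), HasDerivAt G vv (s:ℂ) →
      HasDerivAt (fun y : ℝ => G y) vv s := by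
    intro G s vv hG
    have h1 := (hG.hasFDerivAt.restrictScalars ℝ).comp s (Complex.ofRealCLM.hasFDerivAt (x := s))
    have h2 := h1.hasDerivAt
    simpa [Function.comp_def] using h2
  have hGanalytic : AnalyticOnNhd ℂ g (ball (0:ℂ) r) := hdOn.analyticOnNhd isOpen_ball
  -- iterated derivatives along the real axis agree with complex iterated derivatives
  have hcomp : ∀ n : ℕ, ∀ G : ℂ → Oct, AnalyticOnNhd ℂ G (ball (0:ℂ) r) →
      ∀ t : ℝ, |t| < r → iteratedDeriv n (fun s : ℝ => G s) t = iteratedDeriv n G (t:ℂ) := by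
    intro n
    induction n with
    | zero => intro G hG t ht; simp [iteratedDeriv_zero]
    | succ n ih =>
      intro G hG t ht
      rw [iteratedDeriv_succ', iteratedDeriv_succ']
      have hGd : AnalyticOnNhd ℂ (deriv G) (ball (0:ℂ) r) := hG.deriv
      have heq : deriv (fun s : ℝ => G s) =ᶠ[nhds t] (fun s : ℝ => deriv G s) := by
        have hopen : IsOpen {s : ℝ | |s| < r} := isOpen_lt continuous_abs continuous_const
        filter_upwards [hopen.mem_nhds ht] with s hs
        have hmem : (s:ℂ) ∈ ball (0:ℂ) r := by
          rw [mem_ball_zero_iff]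
          simpa [Complex.norm_real] using hs
        have hd := ((hG (s:ℂ) hmem).differentiableAt.hasDerivAt)
        exact (hcor G s _ hd).deriv
      rw [heq.iteratedDeriv_eq n]
      exact ih (deriv G) hGd t ht
  -- identification of the coefficients
  have hone : (fun t : ℝ => g (t:ℂ)) = fun t : ℝ => f (t • oone) := by
    funext t; show f (iotaC I (t:ℂ)) = _; rw [iota_ofReal]
  have hcoeff : ∀ n : ℕ, p.coeff n
      = ((Nat.factorial n : ℝ))⁻¹ • iteratedDeriv n (fun t : ℝ => f (t • oone)) 0 := by
    intro n
    have h1 := hps.factorial_smul (1:ℂ) n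
    have h2 : p n (fun _ => (1:ℂ)) = p.coeff n := rfl
    have h3 : iteratedFDeriv ℂ n g 0 (fun _ => (1:ℂ)) = iteratedDeriv n g 0 :=
      (iteratedDeriv_eq_iteratedFDeriv).symm
    have h4 : iteratedDeriv n (fun s : ℝ => g (s:ℂ)) 0 = iteratedDeriv n g ((0:ℝ):ℂ) :=
      hcomp n g hGanalytic 0 (by simpa using hr)
    rw [h2, h3] at h1
    rw [Complex.ofReal_zero] at h4
    rw [← h4, hone] at h1
    have hfact : ((Nat.factorial n : ℝ)) ≠ 0 := by
      exact_mod_cast Nat.factorial_ne_zero n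
    rw [← Nat.cast_smul_eq_nsmul ℝ] at h1
    rw [eq_comm, inv_smul_eq_iff₀ hfact]
    exact h1.symm
  -- conclude via the power series expansion
  have hzmem : z ∈ Metric.eball (0:ℂ) R := by
    rw [Metric.eball_coe, mem_ball_zero_iff]
    exact hzR
  have hsum := hps.hasSum hzmem
  rw [zero_add] at hsum
  have hterm : (fun n : ℕ => omul (opow (iotaC I z) n)
      (((Nat.factorial n : ℝ))⁻¹ • iteratedDeriv n (fun t : ℝ => f (t • oone)) 0))
      = fun n : ℕ => p n fun _ => z := by
    funext n
    rw [← hcoeff n, p.apply_eq_pow_smul_coeff, opow_iota hI, omul_iota]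
    rfl
  rw [hterm]
  exact hsum

lemma unit_apply' (i k : Fin 8) : (unit i : Oct) k = if k = i then 1 else 0 := by
  simp [unit, EuclideanSpace.single_apply]

lemma norm_unit (i : Fin 8) : ‖(unit i : Oct)‖ = 1 := by
  refine sq_eq_of_nonneg (norm_nonneg _) zero_le_one ?_
  rw [norm_sq_eq, one_pow]
  rw [Finset.sum_congr rfl (fun k _ => by rw [unit_apply'] : ∀ k ∈ Finset.univ,
    ((unit i : Oct) k) ^ 2 = (if k = i then (1:ℝ) else 0) ^ 2)]
  simp [apply_ite (fun t : ℝ => t ^ 2)]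

lemma unit_one_mem : (unit 1 : Oct) ∈ sphS' := by
  constructor
  · rw [unit_apply']; norm_num
  · exact norm_unit 1

lemma exists_slice (x : Oct) : ∃ I ∈ sphS', ∃ z : ℂ, x = iotaC I z := by
  by_cases hy : x - (x 0) • oone = 0
  · exact ⟨unit 1, unit_one_mem, ((x 0 : ℝ) : ℂ), by rw [iota_ofReal]; exact (sub_eq_zero.mp hy)⟩
  · set y := x - (x 0) • oone with hy'
    have hny : ‖y‖ ≠ 0 := fun h => hy (norm_eq_zero.mp h)
    have hy0 : y 0 = 0 := by
      have h : y 0 = x 0 - (x 0) * oone 0 := rfl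
      rw [h, oone_c0']; ring
    refine ⟨‖y‖⁻¹ • y, ⟨?_, ?_⟩, ⟨x 0, ‖y‖⟩, ?_⟩
    · show (‖y‖⁻¹ • y) 0 = 0
      rw [smul_apply', hy0, mul_zero]
    · rw [norm_smul, Real.norm_eq_abs, abs_inv, abs_norm, inv_mul_cancel₀ hny]
    · show x = (x 0) • oone + ‖y‖ • (‖y‖⁻¹ • y)
      rw [smul_smul, mul_inv_cancel₀ hny, one_smul, hy']
      abel

open Metric in
lemma backward_key (r : ℝ) (hr : 0 < r) (f : Oct → Oct) (a : ℕ → Oct)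
    (hsum : ∀ x ∈ ball (0 : Oct) r, HasSum (fun n : ℕ => omul (opow x n) (a n)) (f x)) :
    SliceMonogenicOn f (ball (0 : Oct) r) := by
  intro I hI u v hx
  have hI' : I ∈ sphS' := hI
  letI := sliceNS I hI'
  haveI := slice_tower I hI'
  -- the coefficient power series
  set p : FormalMultilinearSeries ℂ ℂ Oct :=
    fun n => ContinuousMultilinearMap.mkPiRing ℂ (Fin n) (a n) with hpdef
  -- for points on the slice, the octonionic sum is the complex power series sum
  have hterm : ∀ (w : ℂ) (n : ℕ), omul (opow (iotaC I w) n) (a n) = p n fun _ => w := by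
    intro w n
    rw [opow_iota hI', omul_iota]
    show _ = (∏ _i : Fin n, w) • a n
    rw [Finset.prod_const]
    simp only [Finset.card_univ, Fintype.card_fin]
    rfl
  have hslice : ∀ w : ℂ, ‖w‖ < r →
      HasSum (fun n : ℕ => p n fun _ => w) (f (iotaC I w)) := by
    intro w hw
    have hmem : iotaC I w ∈ ball (0 : Oct) r := by
      rw [mem_ball_zero_iff, norm_iota hI']; exact hw
    have := hsum _ hmem
    rwa [show (fun n : ℕ => omul (opow (iotaC I w) n) (a n))
      = fun n : ℕ => p n fun _ => w from funext (hterm w)] at this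
  -- radius of p is at least r
  have hrad : ENNReal.ofReal r ≤ p.radius := by
    refine ENNReal.le_of_forall_nnreal_lt fun s hs => ?_
    have hsr : (s : ℝ) < r := by
      rwa [← ENNReal.ofReal_coe_nnreal, ENNReal.ofReal_lt_ofReal_iff hr] at hs
    have hsum_s := (hslice ((s : ℝ) : ℂ) (by simpa [Complex.norm_real, abs_of_nonneg s.coe_nonneg] using hsr)).summable
    have hsn : Summable fun n : ℕ => ‖p n fun _ => ((s : ℝ) : ℂ)‖ := summable_norm_iff.mpr hsum_s
    apply p.le_radius_of_summable
    refine hsn.congr fun n => ?_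
    show ‖p n fun _ => ((s : ℝ) : ℂ)‖ = ‖p n‖ * (s : ℝ) ^ n
    rw [hpdef]
    show ‖(∏ _i : Fin n, ((s : ℝ) : ℂ)) • a n‖ = _
    rw [norm_smul, ContinuousMultilinearMap.norm_mkPiRing, Finset.prod_const]
    simp [Complex.norm_real, abs_of_nonneg s.coe_nonneg, mul_comm]
  have hradpos : 0 < p.radius := lt_of_lt_of_le (by simpa using hr) hrad
  have hg : HasFPowerSeriesOnBall p.sum p 0 p.radius := p.hasFPowerSeriesOnBall hradpos
  -- f agrees with p.sum on the slice
  have hagree : ∀ w : ℂ, ‖w‖ < r → f (iotaC I w) = p.sum w := by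
    intro w hw
    have h1 := hslice w hw
    have hwmem : w ∈ Metric.eball (0 : ℂ) p.radius := by
      rw [Metric.mem_eball, edist_zero_right, ← ofReal_norm]
      refine lt_of_lt_of_le ?_ hrad
      rw [ENNReal.ofReal_lt_ofReal_iff hr]
      exact hw
    have h2 := hg.hasSum hwmem
    rw [zero_add] at h2
    exact h1.unique h2
  -- now verify the slice Cauchy-Riemann conditions at (u, v)
  set z₀ : ℂ := ⟨u, v⟩ with hz₀
  have hz₀r : ‖z₀‖ < r := by
    rw [← norm_iota hI']
    exact mem_ball_zero_iff.mp hx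
  -- the real-linear embedding ℝ × ℝ → ℂ
  set ψ : ℝ × ℝ →L[ℝ] ℂ := (Complex.equivRealProdCLM.symm : ℝ × ℝ →L[ℝ] ℂ) with hψ
  have hψap : ∀ q : ℝ × ℝ, ψ q = Complex.mk q.1 q.2 := by
    intro q
    show Complex.equivRealProdCLM.symm (q.1, q.2) = _
    rw [Complex.equivRealProdCLM_symm_apply]
    exact (Complex.mk_eq_add_mul_I q.1 q.2).symm
  -- p.sum is complex differentiable at z₀
  have hpz : DifferentiableAt ℂ p.sum z₀ := by
    refine (hg.analyticAt_of_mem ?_).differentiableAt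
    rw [Metric.mem_eball, edist_zero_right, ← ofReal_norm]
    refine lt_of_lt_of_le ?_ hrad
    rw [ENNReal.ofReal_lt_ofReal_iff hr]
    simpa using hz₀r
  set L : ℂ →L[ℂ] Oct := fderiv ℂ p.sum z₀ with hLdef
  have hLd : HasFDerivAt p.sum (L.restrictScalars ℝ) z₀ := (hpz.hasFDerivAt).restrictScalars ℝ
  -- G is the composition, h agrees with it near (u,v)
  set G : ℝ × ℝ → Oct := fun q => p.sum (ψ q) with hGdef
  have hψuv : ψ (u, v) = z₀ := by rw [hψap (u,v)]
  have hGd : HasFDerivAt G ((L.restrictScalars ℝ).comp ψ) (u, v) := by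
    have := hLd.comp (u, v) (ψ.hasFDerivAt (x := (u,v)))
    exact this
  set h : ℝ × ℝ → Oct := fun q => f (q.1 • oone + q.2 • I) with hh
  have hS : IsOpen {q : ℝ × ℝ | ‖ψ q‖ < r} :=
    isOpen_lt (continuous_norm.comp ψ.continuous) continuous_const
  have hmemS : (u, v) ∈ {q : ℝ × ℝ | ‖ψ q‖ < r} := by
    show ‖ψ (u, v)‖ < r
    rw [hψuv]; exact hz₀r
  have hloc : h =ᶠ[nhds (u, v)] G := by
    filter_upwards [hS.mem_nhds hmemS] with q hq
    show f (q.1 • oone + q.2 • I) = p.sum (ψ q)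
    have : q.1 • oone + q.2 • I = iotaC I (ψ q) := by
      rw [hψap q]; rfl
    rw [this, hagree (ψ q) hq]
  have hdiff_h : DifferentiableAt ℝ h (u, v) := by
    have hGdiff : DifferentiableAt ℝ G (u, v) := hGd.differentiableAt
    exact (Filter.EventuallyEq.differentiableAt_iff hloc).mpr hGdiff
  have hfd : fderiv ℝ h (u, v) = (L.restrictScalars ℝ).comp ψ := by
    rw [hloc.fderiv_eq]
    exact hGd.fderiv
  constructor
  · exact hdiff_h
  · rw [hfd]
    have e1 : ((L.restrictScalars ℝ).comp ψ) (1, 0) = L 1 := by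
      have : ψ (1, 0) = 1 := by rw [hψap (1,0)]; apply Complex.ext <;> simp
      show L.restrictScalars ℝ (ψ (1,0)) = L 1
      rw [this]; rfl
    have e2 : ((L.restrictScalars ℝ).comp ψ) (0, 1) = omul I (L 1) := by
      have h1 : ψ (0, 1) = Complex.I := by rw [hψap (0,1)]; apply Complex.ext <;> simp
      show L.restrictScalars ℝ (ψ (0,1)) = omul I (L 1)
      rw [h1]
      show L Complex.I = omul I (L 1)
      have h2 : L Complex.I = Complex.I • L 1 := by
        rw [← L.map_smul, smul_eq_mul, mul_one]
      rw [h2]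
      show Complex.I.re • L 1 + Complex.I.im • omul I (L 1) = omul I (L 1)
      rw [Complex.I_re, Complex.I_im, zero_smul, one_smul, zero_add]
    rw [e1, e2, omul_I_sq hI', add_neg_cancel]

end Oct

/-- A function `f : B₈(0,r) → 𝕆` is slice monogenic if and only if it
admits a power series expansion `f(x) = Σₙ xⁿ aₙ` with octonionic coefficients on the
right, converging on `B₈(0,r)`. -/
theorem slice_monogenic_iff_power_series
    (r : ℝ) (hr : 0 < r) (f : Oct → Oct) :
    Oct.SliceMonogenicOn f (Metric.ball (0 : Oct) r) ↔
      ∃ a : ℕ → Oct, ∀ x ∈ Metric.ball (0 : Oct) r,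
        HasSum (fun n : ℕ => Oct.omul (Oct.opow x n) (a n)) (f x) := by
  constructor
  · intro hsm
    refine ⟨fun n => ((Nat.factorial n : ℝ))⁻¹ • iteratedDeriv n (fun t : ℝ => f (t • Oct.oone)) 0, ?_⟩
    intro x hx
    obtain ⟨I, hI, z, rfl⟩ := Oct.exists_slice x
    have hz : ‖z‖ < r := by
      rw [← Oct.norm_iota hI]; exact mem_ball_zero_iff.mp hx
    exact Oct.forward_key r hr f hsm I hI z hz
  · rintro ⟨a, ha⟩
    exact Oct.backward_key r hr f a ha
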